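/- Let k > 0, ε > 0, let a ∈ {1, −1}, let c ∈ ℝ, and let n ∈ ℝ² be a unit vector. Define u = k·(c·n + a·(√3·ε/2)·(J n)) and σ = ⟪u, J n⟫ / ‖u‖. Then ‖u‖ = k·√(c² + 3ε²/4), and σ satisfies 0 < a·σ ≤ 1; that is, |σ| ∈ (0, 1] and the sign of σ equals a. Moreover a·σ = 1 if and only if c = 0. -/

import Mathlib

open RealInnerProductSpace

/-- Counterclockwise rotation by π/2 in the Euclidean plane. -/
noncomputable def J (p : EuclideanSpace ℝ (Fin 2)) : EuclideanSpace ℝ (Fin 2) :=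
  WithLp.toLp 2 ![-p 1, p 0]

/-- Theorem 1 (nonzero rate of progress): the rate of progress σ along the obstacle
boundary satisfies |σ| ∈ (0, 1] with sign equal to a, and a σ = 1 iff c = 0. -/
theorem wall_following_rate_of_progress
    (k ε : ℝ) (hk : 0 < k) (hε : 0 < ε)
    (a : ℝ) (ha : a = 1 ∨ a = -1) (c : ℝ)
    (n : EuclideanSpace ℝ (Fin 2)) (hn : ‖n‖ = 1)
    (u : EuclideanSpace ℝ (Fin 2))
    (hu : u = k • (c • n + (a * (Real.sqrt 3 * ε / 2)) • J n))
    (σ : ℝ) (hσ : σ = ⟪u, J n⟫ / ‖u‖) :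
    ‖u‖ = k * Real.sqrt (c ^ 2 + 3 * ε ^ 2 / 4) ∧
      0 < a * σ ∧ a * σ ≤ 1 ∧ (a * σ = 1 ↔ c = 0) := by
  have ha2 : a ^ 2 = 1 := by rcases ha with h | h <;> simp [h]
  have hnn : ⟪n, n⟫ = 1 := by
    have := real_inner_self_eq_norm_sq n
    rw [hn] at this; simpa using this
  have hJJ : ⟪J n, J n⟫ = 1 := by
    simp only [J, PiLp.inner_apply, Fin.sum_univ_two, Matrix.cons_val_zero,
      Matrix.cons_val_one, Matrix.head_cons, RCLike.inner_apply, starRingEnd_apply] at hnn ⊢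
    simp at hnn ⊢
    linarith
  have hnJ : ⟪n, J n⟫ = 0 := by
    simp only [J, PiLp.inner_apply, Fin.sum_univ_two, Matrix.cons_val_zero,
      Matrix.cons_val_one, Matrix.head_cons, RCLike.inner_apply, starRingEnd_apply]
    simp; ring
  set b := a * (Real.sqrt 3 * ε / 2) with hb
  have hJn' : ⟪J n, n⟫ = 0 := by rw [real_inner_comm]; exact hnJ
  have h3 : Real.sqrt 3 * ε / 2 = Real.sqrt (3 * ε ^ 2 / 4) := by
    rw [show 3 * ε ^ 2 / 4 = 3 * (ε / 2) ^ 2 by ring, Real.sqrt_mul (by norm_num),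
      Real.sqrt_sq (by positivity)]; ring
  have huJ : ⟪u, J n⟫ = k * b := by
    rw [hu, real_inner_smul_left, inner_add_left, real_inner_smul_left,
      real_inner_smul_left, hnJ, hJJ]
    ring
  have huu : ⟪u, u⟫ = k ^ 2 * (c ^ 2 + 3 * ε ^ 2 / 4) := by
    rw [hu, real_inner_smul_left, real_inner_smul_right, inner_add_left, inner_add_right,
      inner_add_right, real_inner_smul_left, real_inner_smul_left, real_inner_smul_left,
      real_inner_smul_left, real_inner_smul_right, real_inner_smul_right,
      real_inner_smul_right, real_inner_smul_right, hnn, hJJ, hnJ, hJn']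
    have key : a ^ 2 * Real.sqrt 3 ^ 2 = 3 := by
      rw [ha2, Real.sq_sqrt (by norm_num : (3:ℝ) ≥ 0)]; ring
    rw [hb]; linear_combination (k ^ 2 * ε ^ 2 / 4) * key
  have hq : (0:ℝ) < c ^ 2 + 3 * ε ^ 2 / 4 := by positivity
  have hnu : ‖u‖ = k * Real.sqrt (c ^ 2 + 3 * ε ^ 2 / 4) := by
    have := real_inner_self_eq_norm_sq u
    rw [huu] at this
    have : ‖u‖ ^ 2 = (k * Real.sqrt (c ^ 2 + 3 * ε ^ 2 / 4)) ^ 2 := by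
      rw [← this, mul_pow, Real.sq_sqrt hq.le]
    have h1 : (0:ℝ) ≤ ‖u‖ := norm_nonneg _
    have h2 : (0:ℝ) ≤ k * Real.sqrt (c ^ 2 + 3 * ε ^ 2 / 4) := by positivity
    nlinarith
  set s := Real.sqrt (c ^ 2 + 3 * ε ^ 2 / 4) with hs
  have hspos : 0 < s := Real.sqrt_pos.mpr hq
  have hσ' : a * σ = Real.sqrt (3 * ε ^ 2 / 4) / s := by
    rw [hσ, huJ, hnu, hb, ← h3]
    field_simp
    rcases ha with h | h <;> rw [h] <;> ring
  have h0 : 0 < Real.sqrt (3 * ε ^ 2 / 4) := Real.sqrt_pos.mpr (by positivity)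
  have hle : Real.sqrt (3 * ε ^ 2 / 4) ≤ s := Real.sqrt_le_sqrt (by nlinarith [sq_nonneg c])
  refine ⟨hnu, ?_, ?_, ?_⟩
  · rw [hσ']; positivity
  · rw [hσ', div_le_one hspos]; exact hle
  · rw [hσ', div_eq_one_iff_eq hspos.ne']
    constructor
    · intro h
      have h2 : 3 * ε ^ 2 / 4 = c ^ 2 + 3 * ε ^ 2 / 4 :=
        (Real.sqrt_inj (by positivity) hq.le).mp h
      have : c ^ 2 = 0 := by linarith
      exact pow_eq_zero_iff (by norm_num) |>.mp this
    · intro h; rw [hs, h]; norm_num
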